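/- arXiv:math/0406450 — 3 statements merged into one kernel-verified Lean document; each statement's English description precedes it below -/
import Mathlib

section
/- Let ξ be a complex number on the unit circle satisfying ξ^(2k+2) + ξ^(k+1) - ξ^k + 1 = 0 for some positive integer k. Then ξ = -1 and k is even. -/
theorem unit_circle_zero_of_pk (k : ℕ) (hk : 0 < k) (ξ : ℂ) (hξ : ‖ξ‖ = 1)
    (hroot : ξ ^ (2 * k + 2) + ξ ^ (k + 1) - ξ ^ k + 1 = 0) :
    ξ = -1 ∧ Even k := by
  set c := (starRingEnd ℂ) ξ with hc
  have hns : ξ * c = 1 := by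
    rw [hc, Complex.mul_conj, Complex.normSq_eq_norm_sq, hξ]
    norm_num
  have hpow : ξ ^ (k+1) * c ^ (k+1) = 1 := by rw [← mul_pow, hns, one_pow]
  have hpk : ξ ^ k * c ^ (k+1) = c := by
    calc ξ ^ k * c ^ (k+1) = (ξ*c)^k * c := by ring
    _ = c := by rw [hns]; ring
  have h2k : ξ ^ (2*k+2) * c^(k+1) = ξ^(k+1) := by
    have h : ξ ^ (2*k+2) = ξ^(k+1) * ξ^(k+1) := by rw [← pow_add]; congr 1; omega
    rw [h, mul_assoc, hpow, mul_one]
  have h2 : ξ^(k+1) + 1 - c + c^(k+1) = 0 := by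
    have h := congrArg (· * c^(k+1)) hroot
    simp only [zero_mul] at h
    calc ξ^(k+1) + 1 - c + c^(k+1)
        = ξ^(2*k+2)*c^(k+1) + ξ^(k+1)*c^(k+1) - ξ^k*c^(k+1) + 1*c^(k+1) := by
          rw [h2k, hpow, hpk, one_mul]
      _ = (ξ^(2*k+2) + ξ^(k+1) - ξ^k + 1) * c^(k+1) := by ring
      _ = 0 := h
  have him : ξ.im = 0 := by
    have h := congrArg Complex.im h2
    simp only [hc, ← map_pow, Complex.add_im, Complex.sub_im, Complex.one_im,
      Complex.conj_im, Complex.zero_im] at h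
    linarith
  have hre : ξ = (ξ.re : ℂ) := by
    apply Complex.ext <;> simp [him]
  have habs : |ξ.re| = 1 := by
    have := hξ
    rw [hre] at this
    simpa using this
  rcases abs_eq (by norm_num : (0:ℝ) ≤ 1) |>.mp habs with h1 | h1
  · exfalso
    rw [hre, h1] at hroot
    norm_num at hroot
  · have hξm : ξ = -1 := by rw [hre, h1]; norm_num
    refine ⟨hξm, ?_⟩
    rcases Nat.even_or_odd k with he | ho
    · exact he
    · exfalso
      rw [hξm] at hroot
      have hk1 : Even (k+1) := ho.add_one
      rw [Even.neg_one_pow (by exact (even_two_mul k).add even_two : Even (2*k+2)),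
          Even.neg_one_pow hk1, Odd.neg_one_pow ho] at hroot
      norm_num at hroot
end

section
/- The power series f(x,y) = ∑_{n≥1} (x^n/(1-nx)) y^n (viewed as a power series in y with coefficients rational functions in x) satisfies the differential equation x y² (1-xy) ∂²f/∂y² - y(1 - xy + x²y) ∂f/∂y + f = 0; hence f is D-finite in y. -/
open PowerSeries

lemma ratfunc_one_sub_ne (n : ℕ) : (1 - (n : RatFunc ℂ) * RatFunc.X) ≠ 0 := by
  have h : (1 - (n : RatFunc ℂ) * RatFunc.X)
      = algebraMap (Polynomial ℂ) (RatFunc ℂ) (1 - (n : Polynomial ℂ) * Polynomial.X) := by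
    push_cast [RatFunc.algebraMap_X]
    ring
  rw [h, ne_eq, map_eq_zero_iff _ (RatFunc.algebraMap_injective ℂ)]
  intro h2
  have := congrArg (Polynomial.coeff · 0) h2
  simp at this

lemma coeff_shift {R : Type*} [CommRing R] (p : PowerSeries R) (n k : ℕ) (h : k ≤ n) :
    PowerSeries.coeff n (X ^ k * p) = PowerSeries.coeff (n - k) p := by
  obtain ⟨d, rfl⟩ : ∃ d, n = d + k := ⟨n - k, by omega⟩
  simpa using PowerSeries.coeff_X_pow_mul p k d

lemma coeff_shift0 {R : Type*} [CommRing R] (p : PowerSeries R) (n k : ℕ) (h : n < k) :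
    PowerSeries.coeff n (X ^ k * p) = 0 :=
  (PowerSeries.X_pow_dvd_iff.mp (dvd_mul_right _ _)) n h

/-- The power series `f(x,y) = ∑_{n≥1} (x^n/(1-nx)) yⁿ`, viewed as a power series in `y`
with coefficients in `ℂ(x)`, satisfies
`x y² (1-xy) f'' - y (1 - xy + x²y) f' + f = 0`, hence is D-finite in `y`. -/
theorem example_series_satisfies_ODE :
    ∀ f : PowerSeries (RatFunc ℂ),
      f = PowerSeries.mk (fun n => if n = 0 then 0 else
            RatFunc.X ^ n / (1 - (n : RatFunc ℂ) * RatFunc.X)) →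
      (C (R := RatFunc ℂ) RatFunc.X) * X ^ 2 * (1 - C (R := RatFunc ℂ) RatFunc.X * X) *
          ((PowerSeries.derivative (RatFunc ℂ)) ((PowerSeries.derivative (RatFunc ℂ)) f))
        - X * (1 - C (R := RatFunc ℂ) RatFunc.X * X + C (R := RatFunc ℂ) (RatFunc.X ^ 2) * X) *
          ((PowerSeries.derivative (RatFunc ℂ)) f)
        + f = 0 := by
  intro f hf
  set x : RatFunc ℂ := RatFunc.X with hx
  set f' := (PowerSeries.derivative (RatFunc ℂ)) f with hf'
  set f'' := (PowerSeries.derivative (RatFunc ℂ)) f' with hf''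
  have key : (C (R := RatFunc ℂ) x) * X ^ 2 * (1 - C (R := RatFunc ℂ) x * X) * f''
        - X * (1 - C (R := RatFunc ℂ) x * X + C (R := RatFunc ℂ) (x ^ 2) * X) * f' + f
      = X ^ 2 * (C (R := RatFunc ℂ) x * f'') - X ^ 3 * (C (R := RatFunc ℂ) (x^2) * f'')
        - X ^ 1 * f' + X ^ 2 * (C (R := RatFunc ℂ) x * f') - X ^ 2 * (C (R := RatFunc ℂ) (x^2) * f') + f := by
    simp only [map_pow]
    ring
  rw [key]
  ext n
  simp only [map_add, map_sub, map_zero]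
  match n with
  | 0 =>
    simp [hf, coeff_shift0, coeff_derivative, f', f'']
  | 1 =>
    rw [coeff_shift0 _ _ 2 (by omega), coeff_shift0 _ _ 3 (by omega),
      coeff_shift0 _ _ 2 (by omega), coeff_shift0 _ _ 2 (by omega),
      coeff_shift _ _ 1 (by omega)]
    simp [hf, coeff_derivative, f', f'']
  | 2 =>
    rw [coeff_shift _ _ 2 (by omega), coeff_shift0 _ _ 3 (by omega),
      coeff_shift _ _ 2 (by omega), coeff_shift _ _ 2 (by omega),
      coeff_shift _ _ 1 (by omega)]
    simp only [hf, hf', hf'', coeff_derivative, coeff_mk, coeff_C_mul]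
    have h2 : (1 - (2:RatFunc ℂ) * x) ≠ 0 := by simpa using ratfunc_one_sub_ne 2
    have h1 : (1 - x) ≠ 0 := by simpa using ratfunc_one_sub_ne 1
    norm_num
    field_simp [h1, h2, show (1 - x * 2) ≠ 0 by rwa [mul_comm]]
    ring
  | (m+3) =>
    rw [coeff_shift _ _ 2 (by omega), coeff_shift _ _ 3 (by omega),
      coeff_shift _ _ 2 (by omega), coeff_shift _ _ 2 (by omega),
      coeff_shift _ _ 1 (by omega)]
    simp only [hf, hf', hf'', coeff_derivative, coeff_mk, coeff_C_mul,
      show m+3-2 = m+1 from rfl, show m+3-3 = m from rfl, show m+3-1 = m+2 from rfl]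
    simp only [Nat.add_eq_zero, Nat.succ_ne_zero, and_false, false_and, if_false, reduceIte]
    have h2 : (1 - ((m:RatFunc ℂ)+3) * x) ≠ 0 := by
      have := ratfunc_one_sub_ne (m+3); push_cast at this; simpa using this
    have h1 : (1 - ((m:RatFunc ℂ)+2) * x) ≠ 0 := by
      have := ratfunc_one_sub_ne (m+2); push_cast at this; simpa using this
    have hv : x ^ (m+3) / (1 - ((m:RatFunc ℂ)+3) * x) * (1 - ((m:RatFunc ℂ)+3) * x)
        = x ^ (m+3) := div_mul_cancel₀ _ h2
    have hu : x ^ (m+2) / (1 - ((m:RatFunc ℂ)+2) * x) * (1 - ((m:RatFunc ℂ)+2) * x)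
        = x ^ (m+2) := div_mul_cancel₀ _ h1
    push_cast
    linear_combination (-((m:RatFunc ℂ)+2)) * hv + (((m:RatFunc ℂ)+2) * x) * hu
end

section
/- Define c_8(s,x) = -2sx²(s²x² + sx - s + 1)/((1-sx)⁴(1-x)²). For a positive integer k and a root of unity ξ≠±1 with ξ^(k+1) ≠ 1, we have c_8(ξ^k, ξ) ≠ 0. -/
/-- `c₈(s,x) = -2sx²(s²x² + sx - s + 1)/((1-sx)⁴(1-x)²)` does not vanish at `s = ξ^k`,
`x = ξ` for a root of unity `ξ ≠ ±1` with `ξ^(k+1) ≠ 1`. -/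
theorem c8_ne_zero (k : ℕ) (hk : 0 < k) (ξ : ℂ) (hru : ∃ n : ℕ, 0 < n ∧ ξ ^ n = 1)
    (h1 : ξ ≠ 1) (hneg1 : ξ ≠ -1) (hk1 : ξ ^ (k + 1) ≠ 1) :
    -2 * ξ ^ k * ξ ^ 2 * ((ξ ^ k) ^ 2 * ξ ^ 2 + ξ ^ k * ξ - ξ ^ k + 1) /
      ((1 - ξ ^ k * ξ) ^ 4 * (1 - ξ) ^ 2) ≠ 0 := by
  obtain ⟨n, hn, hξn⟩ := hru
  have hξ0 : ξ ≠ 0 := by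
    intro h; rw [h, zero_pow hn.ne'] at hξn; exact zero_ne_one hξn
  have habs : ‖ξ‖ = 1 := by
    have h1' : ‖ξ‖ ^ n = 1 := by rw [← norm_pow, hξn, norm_one]
    have h0 : 0 ≤ ‖ξ‖ := norm_nonneg ξ
    rcases lt_trichotomy (‖ξ‖) 1 with h | h | h
    · exact absurd h1' (pow_lt_one₀ h0 h hn.ne').ne
    · exact h
    · exact absurd h1' (one_lt_pow₀ h hn.ne').ne'
  have hw1 : ξ ^ k * ξ ≠ 1 := by rw [← pow_succ]; exact hk1
  have hden : (1 - ξ ^ k * ξ) ^ 4 * (1 - ξ) ^ 2 ≠ 0 :=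
    mul_ne_zero (pow_ne_zero _ (sub_ne_zero.2 (Ne.symm hw1)))
      (pow_ne_zero _ (sub_ne_zero.2 (Ne.symm h1)))
  have hP : (ξ ^ k) ^ 2 * ξ ^ 2 + ξ ^ k * ξ - ξ ^ k + 1 ≠ 0 := by
    intro hP0
    set w := ξ ^ k * ξ with hw
    have hx : ξ ^ k = w ^ 2 + w + 1 := by rw [hw]; linear_combination -hP0
    have habsw : ‖w‖ = 1 := by
      rw [hw, norm_mul, norm_pow, habs]; norm_num
    have hwc : w * (starRingEnd ℂ) w = 1 := by
      rw [Complex.mul_conj, Complex.normSq_eq_norm_sq, habsw]; norm_num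
    have hx2 : ξ ^ k = w * (1 + w + (starRingEnd ℂ) w) := by
      linear_combination hx - hwc
    have hx3 : ξ ^ k = w * ((1 + 2 * w.re : ℝ) : ℂ) := by
      have hac := Complex.add_conj w
      push_cast at hac ⊢
      linear_combination hx2 + w * hac
    have habs3 : |1 + 2 * w.re| = 1 := by
      have h5 := congrArg (‖·‖) hx3
      rw [norm_pow, habs, one_pow, norm_mul, habsw, one_mul, Complex.norm_real, Real.norm_eq_abs] at h5
      exact h5.symm
    rcases (abs_eq (by norm_num : (0:ℝ) ≤ 1)).1 habs3 with h | h
    · -- Re w = 0, so ξ^k = w = ξ^k * ξ, forcing ξ = 1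
      have hre0 : w.re = 0 := by linarith
      have h6 : ξ ^ k = w := by rw [hx3, hre0]; norm_num
      have h7 : ξ ^ k * (ξ - 1) = 0 := by rw [hw] at h6; linear_combination -h6
      rcases mul_eq_zero.1 h7 with h8 | h8
      · exact pow_ne_zero _ hξ0 h8
      · exact h1 (sub_eq_zero.1 h8)
    · -- Re w = -1, so w = -1, ξ^k = 1, ξ = -1
      have hre : w.re = -1 := by linarith
      have hns : Complex.normSq w = 1 := by
        rw [Complex.normSq_eq_norm_sq, habsw]; norm_num
      have h3 := Complex.normSq_apply w
      rw [hns, hre] at h3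
      have h4 : w.im * w.im = 0 := by linear_combination -h3
      have him : w.im = 0 := mul_self_eq_zero.1 h4
      have hweq : w = -1 := by
        apply Complex.ext <;> simp [hre, him]
      have hxk : ξ ^ k = 1 := by rw [hx, hweq]; ring
      have hw' := hw
      rw [hxk, one_mul, hweq] at hw'
      exact hneg1 hw'.symm
  exact div_ne_zero
    (mul_ne_zero (mul_ne_zero (mul_ne_zero (by norm_num) (pow_ne_zero _ hξ0))
      (pow_ne_zero _ hξ0)) hP) hden
end
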